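/- Let X be a finite index set, q > 0, 0 < c₁ ≤ c₂, and let (χ_ξ)_{ξ∈X} be a family of vectors in a real normed space W satisfying the Riesz stability bounds c₁·q·‖β‖_{ℓ²} ≤ ‖Σ_{ξ∈X} β_ξ χ_ξ‖_W ≤ c₂·q·‖β‖_{ℓ²} for every β ∈ ℝ^X. Let A and B be invertible real X×X matrices, let f ∈ ℝ^X, and set α = A^{−1}f, α′ = B^{−1}f, u = Σ_ξ α_ξ χ_ξ and u′ = Σ_ξ α′_ξ χ_ξ. Then ‖u − u′‖_W ≤ (c₂/c₁)·‖B^{−1}‖₂·‖B − A‖₂·‖u‖_W, where ‖·‖₂ is the spectral (operator 2-) norm of matrices. -/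

import Mathlib

open Matrix

noncomputable section

/-- Spectral (operator 2-) norm of a real matrix: the supremum of the Euclidean norm of
`M v` over the Euclidean unit ball. -/
noncomputable def specNormR {ι : Type*} [Fintype ι] (M : Matrix ι ι ℝ) : ℝ :=
  sSup {r : ℝ | ∃ v : ι → ℝ, ∑ i, v i ^ 2 ≤ 1 ∧ r = Real.sqrt (∑ i, M.mulVec v i ^ 2)}

lemma euclid_norm_eq {ι : Type*} [Fintype ι] (v : ι → ℝ) :
    ‖(WithLp.equiv 2 (ι → ℝ)).symm v‖ = Real.sqrt (∑ i, v i ^ 2) := by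
  rw [EuclideanSpace.norm_eq]
  simp [Real.norm_eq_abs, sq_abs]

lemma Matrix.toEuclideanLin_apply_piLp_equiv_symm {ι : Type*} [Fintype ι] [DecidableEq ι]
    (M : Matrix ι ι ℝ) (v : ι → ℝ) :
    Matrix.toEuclideanLin M ((WithLp.equiv 2 (ι → ℝ)).symm v) =
      (WithLp.equiv 2 (ι → ℝ)).symm (M *ᵥ v) := rfl

lemma specNormR_eq {ι : Type*} [Fintype ι] [DecidableEq ι] (M : Matrix ι ι ℝ) :
    specNormR M = ‖LinearMap.toContinuousLinearMap (Matrix.toEuclideanLin M)‖ := by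
  rw [← ContinuousLinearMap.sSup_unitClosedBall_eq_norm]
  unfold specNormR
  congr 1
  ext r
  constructor
  · rintro ⟨v, hv, rfl⟩
    refine ⟨(WithLp.equiv 2 (ι → ℝ)).symm v, ?_, ?_⟩
    · rw [Metric.mem_closedBall, dist_zero_right, euclid_norm_eq]
      exact Real.sqrt_le_one.mpr hv
    · show ‖Matrix.toEuclideanLin M ((WithLp.equiv 2 (ι → ℝ)).symm v)‖ = _
      rw [Matrix.toEuclideanLin_apply_piLp_equiv_symm, euclid_norm_eq]
  · rintro ⟨x, hx, rfl⟩
    refine ⟨WithLp.equiv 2 (ι → ℝ) x, ?_, ?_⟩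
    · rw [Metric.mem_closedBall, dist_zero_right] at hx
      have h := euclid_norm_eq (ι := ι) (WithLp.equiv 2 (ι → ℝ) x)
      rw [Equiv.symm_apply_apply] at h
      rw [h] at hx
      have hnn : (0:ℝ) ≤ ∑ i, WithLp.equiv 2 (ι → ℝ) x i ^ 2 :=
        Finset.sum_nonneg fun i _ => sq_nonneg _
      nlinarith [Real.sq_sqrt hnn, Real.sqrt_nonneg (∑ i, WithLp.equiv 2 (ι → ℝ) x i ^ 2)]
    · show ‖Matrix.toEuclideanLin M x‖ = _
      rw [Matrix.toEuclideanLin_apply]; exact euclid_norm_eq (M *ᵥ WithLp.equiv 2 (ι → ℝ) x)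

lemma specNormR_mulVec_le {ι : Type*} [Fintype ι] [DecidableEq ι] (M : Matrix ι ι ℝ)
    (v : ι → ℝ) :
    Real.sqrt (∑ i, M.mulVec v i ^ 2) ≤ specNormR M * Real.sqrt (∑ i, v i ^ 2) := by
  rw [specNormR_eq, ← euclid_norm_eq, ← euclid_norm_eq]
  have := (LinearMap.toContinuousLinearMap (Matrix.toEuclideanLin M)).le_opNorm
    ((WithLp.equiv 2 (ι → ℝ)).symm v)
  rwa [LinearMap.coe_toContinuousLinearMap', Matrix.toEuclideanLin_apply_piLp_equiv_symm] at this

lemma specNormR_nonneg {ι : Type*} [Fintype ι] [DecidableEq ι] (M : Matrix ι ι ℝ) :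
    0 ≤ specNormR M := by rw [specNormR_eq]; exact norm_nonneg _

/-- abstract perturbation of coefficient matrices. Let `(χ_ξ)_{ξ∈X}` be
a Riesz-stable family in a normed space `W`:
`c₁·q·‖β‖₂ ≤ ‖∑ β_ξ χ_ξ‖ ≤ c₂·q·‖β‖₂`. For invertible matrices `A, B` and `f ∈ ℝ^X`,
setting `u = ∑ (A⁻¹f)_ξ χ_ξ` and `u′ = ∑ (B⁻¹f)_ξ χ_ξ`, one has
`‖u − u′‖ ≤ (c₂/c₁)·‖B⁻¹‖₂·‖B − A‖₂·‖u‖`. -/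
theorem statement11 {X : Type*} [Fintype X] [DecidableEq X]
    {W : Type*} [NormedAddCommGroup W] [NormedSpace ℝ W]
    (q c₁ c₂ : ℝ) (hq : 0 < q) (hc₁ : 0 < c₁) (hc : c₁ ≤ c₂)
    (χ : X → W)
    (hlow : ∀ β : X → ℝ, c₁ * q * Real.sqrt (∑ ξ, β ξ ^ 2) ≤ ‖∑ ξ, β ξ • χ ξ‖)
    (hhigh : ∀ β : X → ℝ, ‖∑ ξ, β ξ • χ ξ‖ ≤ c₂ * q * Real.sqrt (∑ ξ, β ξ ^ 2))
    (A B : Matrix X X ℝ) (hA : IsUnit A.det) (hB : IsUnit B.det)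
    (f : X → ℝ) :
    ‖(∑ ξ, A⁻¹.mulVec f ξ • χ ξ) - ∑ ξ, B⁻¹.mulVec f ξ • χ ξ‖ ≤
      c₂ / c₁ * specNormR B⁻¹ * specNormR (B - A) * ‖∑ ξ, A⁻¹.mulVec f ξ • χ ξ‖ := by

  set α := A⁻¹.mulVec f with hα
  set α' := B⁻¹.mulVec f with hα'
  have hAα : A.mulVec α = f := by
    rw [hα, Matrix.mulVec_mulVec, Matrix.mul_nonsing_inv _ hA, Matrix.one_mulVec]
  have key : α - α' = B⁻¹.mulVec ((B - A).mulVec α) := by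
    rw [Matrix.sub_mulVec, Matrix.mulVec_sub, Matrix.mulVec_mulVec,
      Matrix.nonsing_inv_mul _ hB, Matrix.one_mulVec, hAα]
  have hsub : (∑ ξ, α ξ • χ ξ) - ∑ ξ, α' ξ • χ ξ = ∑ ξ, (α - α') ξ • χ ξ := by
    rw [← Finset.sum_sub_distrib]
    exact Finset.sum_congr rfl fun ξ _ => by simp [sub_smul]
  have h1 : ‖(∑ ξ, α ξ • χ ξ) - ∑ ξ, α' ξ • χ ξ‖ ≤
      c₂ * q * Real.sqrt (∑ ξ, (α - α') ξ ^ 2) := by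
    rw [hsub]; exact hhigh _
  have h2 : Real.sqrt (∑ ξ, (α - α') ξ ^ 2) ≤
      specNormR B⁻¹ * (specNormR (B - A) * Real.sqrt (∑ ξ, α ξ ^ 2)) := by
    rw [key]
    calc Real.sqrt (∑ ξ, B⁻¹.mulVec ((B - A).mulVec α) ξ ^ 2)
        ≤ specNormR B⁻¹ * Real.sqrt (∑ ξ, (B - A).mulVec α ξ ^ 2) :=
          specNormR_mulVec_le _ _
      _ ≤ specNormR B⁻¹ * (specNormR (B - A) * Real.sqrt (∑ ξ, α ξ ^ 2)) :=
          mul_le_mul_of_nonneg_left (specNormR_mulVec_le _ _) (specNormR_nonneg _)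
  have h3 : Real.sqrt (∑ ξ, α ξ ^ 2) ≤ ‖∑ ξ, α ξ • χ ξ‖ / (c₁ * q) := by
    rw [le_div_iff₀ (by positivity)]
    linarith [hlow α]
  calc ‖(∑ ξ, α ξ • χ ξ) - ∑ ξ, α' ξ • χ ξ‖
      ≤ c₂ * q * Real.sqrt (∑ ξ, (α - α') ξ ^ 2) := h1
    _ ≤ c₂ * q * (specNormR B⁻¹ * (specNormR (B - A) * (‖∑ ξ, α ξ • χ ξ‖ / (c₁ * q)))) := by
        apply mul_le_mul_of_nonneg_left _ (mul_nonneg (hc₁.trans_le hc).le hq.le)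
        refine h2.trans ?_
        exact mul_le_mul_of_nonneg_left
          (mul_le_mul_of_nonneg_left h3 (specNormR_nonneg _)) (specNormR_nonneg _)
    _ = c₂ / c₁ * specNormR B⁻¹ * specNormR (B - A) * ‖∑ ξ, α ξ • χ ξ‖ := by
        field_simp
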